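/- Let X ∈ ℝ^{d×n}, λ > 0, and 1 ≤ p, q ≤ 2. The function (Z, μ) ↦ Tr((ZᵀZ + μ²I)^{p/2}) + λ ∑_{i=1}^n (‖(XZ − X)_i‖_2² + μ²)^{q/2} is jointly convex in (Z, μ) on ℝ^{n×n} × ℝ. -/

import Mathlib

open Matrix

/-- Real power of a real symmetric matrix, defined through the spectral decomposition
`A = U · diag(λ₁,…,λₙ) · Uᵀ` as `A^r = U · diag(λ₁^r,…,λₙ^r) · Uᵀ`
(junk value `0` if `A` is not symmetric). -/
noncomputable def mpow {n : ℕ} (A : Matrix (Fin n) (Fin n) ℝ) (r : ℝ) :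
    Matrix (Fin n) (Fin n) ℝ :=
  if hA : A.IsHermitian then hA.cfc (fun x : ℝ => x ^ r) else 0

/-- The smoothed LRR objective
`J(Z, μ) = Tr((ZᵀZ + μ²I)^{p/2}) + λ·∑ᵢ (‖(XZ − X)ᵢ‖₂² + μ²)^{q/2}`,
where `(XZ − X)ᵢ` denotes the `i`-th column of `XZ − X`. -/
noncomputable def smoothJ {d n : ℕ} (X : Matrix (Fin d) (Fin n) ℝ) (lam p q : ℝ)
    (Z : Matrix (Fin n) (Fin n) ℝ) (μ : ℝ) : ℝ :=
  (mpow (Zᵀ * Z + μ ^ 2 • (1 : Matrix (Fin n) (Fin n) ℝ)) (p / 2)).trace +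
    lam * ∑ i, (∑ j, ((X * Z - X) j i) ^ 2 + μ ^ 2) ^ (q / 2)

namespace SmoothJAux

variable {m n : Type*} [Fintype m] [Fintype n]

lemma sum_dotProduct (κ : Type*) [Fintype κ] (f : κ → m → ℝ) (x : m → ℝ) :
    (∑ k, f k) ⬝ᵥ x = ∑ k, f k ⬝ᵥ x := by
  simp only [dotProduct, Finset.sum_apply, Finset.sum_mul]
  exact Finset.sum_comm

/-- Sub-Bessel inequality for a pairwise-orthogonal family of sub-unit vectors. -/
lemma subBessel [DecidableEq n] (g : n → m → ℝ) (x : m → ℝ)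
    (horth : ∀ k l, k ≠ l → g k ⬝ᵥ g l = 0) (hle : ∀ k, g k ⬝ᵥ g k ≤ 1) :
    ∑ k, (g k ⬝ᵥ x) ^ 2 ≤ x ⬝ᵥ x := by
  set c : n → ℝ := fun k => g k ⬝ᵥ x with hc
  set s : m → ℝ := ∑ k, c k • g k with hs
  have hsx : s ⬝ᵥ x = ∑ k, c k ^ 2 := by
    rw [hs, sum_dotProduct]
    refine Finset.sum_congr rfl fun k _ => ?_
    rw [smul_dotProduct, smul_eq_mul]
    change c k * c k = c k ^ 2
    ring
  have hgs : ∀ k, g k ⬝ᵥ s = c k * (g k ⬝ᵥ g k) := by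
    intro k
    rw [hs, dotProduct_comm, sum_dotProduct]
    rw [Finset.sum_eq_single k]
    · rw [smul_dotProduct, smul_eq_mul, dotProduct_comm]
    · intro l _ hlk
      rw [smul_dotProduct, smul_eq_mul, horth l k hlk, mul_zero]
    · intro h; exact absurd (Finset.mem_univ k) h
  have hss : s ⬝ᵥ s = ∑ k, c k ^ 2 * (g k ⬝ᵥ g k) := by
    rw [hs, sum_dotProduct]
    refine Finset.sum_congr rfl fun k _ => ?_
    rw [smul_dotProduct, smul_eq_mul, hgs k, sq]
    ring
  have h0 : (0:ℝ) ≤ (x - s) ⬝ᵥ (x - s) := by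
    refine Finset.sum_nonneg fun i _ => mul_self_nonneg _
  have hexp : (x - s) ⬝ᵥ (x - s) = x ⬝ᵥ x - 2 * (s ⬝ᵥ x) + s ⬝ᵥ s := by
    rw [sub_dotProduct, dotProduct_sub, dotProduct_sub, dotProduct_comm s x]
    ring
  have hss_le : s ⬝ᵥ s ≤ ∑ k, c k ^ 2 := by
    rw [hss]
    refine Finset.sum_le_sum fun k _ => ?_
    calc c k ^ 2 * (g k ⬝ᵥ g k) ≤ c k ^ 2 * 1 := by
          refine mul_le_mul_of_nonneg_left (hle k) (sq_nonneg _)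
      _ = c k ^ 2 := mul_one _
  have := hexp ▸ h0
  rw [hsx] at this
  linarith

/-- Subunit-weight Jensen inequality for `x ^ p`, `1 ≤ p`. -/
lemma jensen_subunit {p : ℝ} (hp : 1 ≤ p) (s : Finset n) (w t : n → ℝ)
    (hw : ∀ i ∈ s, 0 ≤ w i) (hw1 : ∑ i ∈ s, w i ≤ 1) (ht : ∀ i ∈ s, 0 ≤ t i) :
    (∑ i ∈ s, w i * t i) ^ p ≤ ∑ i ∈ s, w i * t i ^ p := by
  set r : ℝ := ∑ i ∈ s, w i with hr
  rcases eq_or_lt_of_le (Finset.sum_nonneg hw) with h0 | hpos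
  · have hz : ∀ i ∈ s, w i = 0 := by
      intro i hi
      exact (Finset.sum_eq_zero_iff_of_nonneg hw).1 h0.symm i hi
    have h1 : (∑ i ∈ s, w i * t i) = 0 :=
      Finset.sum_eq_zero fun i hi => by rw [hz i hi, zero_mul]
    have h2 : (∑ i ∈ s, w i * t i ^ p) = 0 :=
      Finset.sum_eq_zero fun i hi => by rw [hz i hi, zero_mul]
    rw [h1, h2, Real.zero_rpow (by positivity)]
  · have hrne : r ≠ 0 := ne_of_gt hpos
    have hjen : (∑ i ∈ s, (w i / r) • t i) ^ p ≤ ∑ i ∈ s, (w i / r) • (t i ^ p) := by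
      refine (convexOn_rpow hp).map_sum_le
        (fun i hi => div_nonneg (hw i hi) (le_of_lt hpos)) ?_ (fun i hi => ht i hi)
      rw [← Finset.sum_div, ← hr, div_self hrne]
    simp only [smul_eq_mul] at hjen
    have hkey : (∑ i ∈ s, w i * t i) = r * ∑ i ∈ s, (w i / r) * t i := by
      rw [Finset.mul_sum]
      refine Finset.sum_congr rfl fun i hi => ?_
      field_simp
    have hnn : 0 ≤ ∑ i ∈ s, (w i / r) * t i :=
      Finset.sum_nonneg fun i hi => mul_nonneg (div_nonneg (hw i hi) (le_of_lt hpos)) (ht i hi)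
    calc (∑ i ∈ s, w i * t i) ^ p = r ^ p * (∑ i ∈ s, (w i / r) * t i) ^ p := by
          rw [hkey, Real.mul_rpow (le_of_lt hpos) hnn]
      _ ≤ r ^ p * ∑ i ∈ s, (w i / r) * t i ^ p := by
          refine mul_le_mul_of_nonneg_left hjen (Real.rpow_nonneg (le_of_lt hpos) _)
      _ = r ^ (p - 1) * ∑ i ∈ s, w i * t i ^ p := by
          have h1 : r ^ p = r ^ (p - 1) * r := by
            rw [← Real.rpow_add_one hrne (p - 1), sub_add_cancel]
          have h2 : r * ∑ i ∈ s, (w i / r) * t i ^ p = ∑ i ∈ s, w i * t i ^ p := by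
            rw [Finset.mul_sum]
            refine Finset.sum_congr rfl fun i hi => ?_
            field_simp
          rw [h1, mul_assoc, h2]
      _ ≤ 1 * ∑ i ∈ s, w i * t i ^ p := by
          refine mul_le_mul_of_nonneg_right ?_ (Finset.sum_nonneg fun i hi =>
            mul_nonneg (hw i hi) (Real.rpow_nonneg (ht i hi) _))
          exact Real.rpow_le_one (le_of_lt hpos) hw1 (by linarith)
      _ = _ := one_mul _

end SmoothJAux

namespace SmoothJAux2

open SmoothJAux

variable {m n : Type*} [Fintype m] [Fintype n] [DecidableEq n]

/-- eigenvalues of `Mᴴ * M` -/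
noncomputable def ev (M : Matrix m n ℝ) (k : n) : ℝ :=
  (Matrix.isHermitian_conjTranspose_mul_self M).eigenvalues k

/-- singular values of `M` -/
noncomputable def sv (M : Matrix m n ℝ) (k : n) : ℝ := Real.sqrt (ev M k)

/-- right singular vectors: columns of the eigenvector unitary of `Mᴴ * M` -/
noncomputable def rvec (M : Matrix m n ℝ) (k : n) : n → ℝ := fun i =>
  ((Matrix.isHermitian_conjTranspose_mul_self M).eigenvectorUnitary : Matrix n n ℝ) i k

/-- left singular vectors -/
noncomputable def lvec (M : Matrix m n ℝ) (k : n) : m → ℝ :=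
  if sv M k = 0 then 0 else (sv M k)⁻¹ • (M *ᵥ rvec M k)

lemma ev_nonneg (M : Matrix m n ℝ) (k : n) : 0 ≤ ev M k :=
  (Matrix.posSemidef_conjTranspose_mul_self M).eigenvalues_nonneg k

lemma sv_nonneg (M : Matrix m n ℝ) (k : n) : 0 ≤ sv M k := Real.sqrt_nonneg _

lemma sq_sv (M : Matrix m n ℝ) (k : n) : sv M k ^ 2 = ev M k :=
  Real.sq_sqrt (ev_nonneg M k)

lemma rvec_dot (M : Matrix m n ℝ) (k l : n) :
    rvec M k ⬝ᵥ rvec M l = if k = l then (1:ℝ) else 0 := by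
  set V : Matrix n n ℝ :=
    ((Matrix.isHermitian_conjTranspose_mul_self M).eigenvectorUnitary : Matrix n n ℝ) with hV
  have h1 : star V * V = 1 :=
    Unitary.star_mul_self_of_mem
      ((Matrix.isHermitian_conjTranspose_mul_self M).eigenvectorUnitary).prop
  have := congrFun (congrFun h1 k) l
  rw [Matrix.mul_apply] at this
  simp only [Matrix.star_apply, star_trivial] at this
  rw [Matrix.one_apply] at this
  exact this

lemma rvec_expand (M : Matrix m n ℝ) (x : n → ℝ) :
    ∑ k, (rvec M k ⬝ᵥ x) • rvec M k = x := by
  set V : Matrix n n ℝ :=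
    ((Matrix.isHermitian_conjTranspose_mul_self M).eigenvectorUnitary : Matrix n n ℝ) with hV
  have h2 : V * star V = 1 :=
    Unitary.mul_star_self_of_mem
      ((Matrix.isHermitian_conjTranspose_mul_self M).eigenvectorUnitary).prop
  funext i
  have hVi : ∀ i' : n, ∑ k, V i k * V i' k = (1 : Matrix n n ℝ) i i' := by
    intro i'
    rw [← h2, Matrix.mul_apply]
    refine Finset.sum_congr rfl fun k _ => ?_
    rw [Matrix.star_apply, star_trivial]
  calc (∑ k, (rvec M k ⬝ᵥ x) • rvec M k) i
      = ∑ k, (∑ i', V i' k * x i') * V i k := by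
        rw [Finset.sum_apply]
        exact Finset.sum_congr rfl fun k _ => rfl
    _ = ∑ k, ∑ i', V i' k * x i' * V i k := by
        refine Finset.sum_congr rfl fun k _ => ?_
        rw [Finset.sum_mul]
    _ = ∑ i', ∑ k, V i' k * x i' * V i k := Finset.sum_comm
    _ = ∑ i', (∑ k, V i k * V i' k) * x i' := by
        refine Finset.sum_congr rfl fun i' _ => ?_
        rw [Finset.sum_mul]
        refine Finset.sum_congr rfl fun k _ => ?_
        ring
    _ = ∑ i', (1 : Matrix n n ℝ) i i' * x i' := by
        refine Finset.sum_congr rfl fun i' _ => ?_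
        rw [hVi i']
    _ = x i := by simp [Matrix.one_apply]

lemma eig_eq (M : Matrix m n ℝ) (k : n) :
    (Mᴴ * M) *ᵥ rvec M k = ev M k • rvec M k := by
  set hM := Matrix.isHermitian_conjTranspose_mul_self M with hhM
  set V : Matrix n n ℝ := (hM.eigenvectorUnitary : Matrix n n ℝ) with hV
  have h1 : star V * V = 1 := Unitary.star_mul_self_of_mem hM.eigenvectorUnitary.prop
  have hdiag : Matrix.diagonal ((RCLike.ofReal : ℝ → ℝ) ∘ hM.eigenvalues)
      = Matrix.diagonal hM.eigenvalues := by
    have hc : (RCLike.ofReal : ℝ → ℝ) ∘ hM.eigenvalues = hM.eigenvalues := by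
      funext j
      simp [RCLike.ofReal_real_eq_id]
    rw [hc]
  have hs : (Mᴴ * M) * V = V * Matrix.diagonal hM.eigenvalues := by
    calc (Mᴴ * M) * V
        = (V * Matrix.diagonal ((RCLike.ofReal : ℝ → ℝ) ∘ hM.eigenvalues) * star V) * V := by
          conv_lhs => rw [hM.spectral_theorem, Unitary.conjStarAlgAut_apply]
      _ = V * Matrix.diagonal hM.eigenvalues * (star V * V) := by
          rw [hdiag, Matrix.mul_assoc]
      _ = V * Matrix.diagonal hM.eigenvalues := by rw [h1, Matrix.mul_one]
  funext i
  have h3 := congrFun (congrFun hs i) k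
  rw [Matrix.mul_apply, Matrix.mul_diagonal] at h3
  have h4 : ((Mᴴ * M) *ᵥ rvec M k) i = ∑ l, (Mᴴ * M) i l * V l k := rfl
  have h5 : (ev M k • rvec M k) i = hM.eigenvalues k * V i k := rfl
  rw [h4, h5, h3, mul_comm]

lemma dot_image (M : Matrix m n ℝ) (x y : n → ℝ) :
    (M *ᵥ x) ⬝ᵥ (M *ᵥ y) = x ⬝ᵥ ((Mᴴ * M) *ᵥ y) := by
  rw [Matrix.conjTranspose_eq_transpose_of_trivial, ← Matrix.mulVec_mulVec,
    Matrix.dotProduct_mulVec x Mᵀ (M *ᵥ y)]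
  rw [Matrix.vecMul_transpose, dotProduct_comm]

lemma dot_image_eq (M : Matrix m n ℝ) (x : n → ℝ) (k : n) :
    (M *ᵥ x) ⬝ᵥ (M *ᵥ rvec M k) = ev M k * (x ⬝ᵥ rvec M k) := by
  rw [dot_image, eig_eq, dotProduct_smul, smul_eq_mul]


lemma mulVec_rvec (M : Matrix m n ℝ) (k : n) :
    M *ᵥ rvec M k = sv M k • lvec M k := by
  by_cases hσ : sv M k = 0
  · rw [lvec, if_pos hσ, hσ, zero_smul]
    have h1 : (M *ᵥ rvec M k) ⬝ᵥ (M *ᵥ rvec M k) = 0 := by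
      rw [dot_image_eq, rvec_dot, if_pos rfl, mul_one, ← sq_sv, hσ]
      norm_num
    exact dotProduct_self_eq_zero.1 h1
  · rw [lvec, if_neg hσ, smul_smul, mul_inv_cancel₀ hσ, one_smul]

lemma dot_sq_comm (u : m → ℝ) (v : m → ℝ) : (u ⬝ᵥ v) ^ 2 = (v ⬝ᵥ u) ^ 2 := by
  rw [dotProduct_comm]

lemma lvec_dot (M : Matrix m n ℝ) (k l : n) :
    lvec M k ⬝ᵥ lvec M l =
      if sv M k = 0 ∨ sv M l = 0 then 0 else (if k = l then 1 else 0) := by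
  by_cases hk : sv M k = 0
  · rw [lvec, if_pos hk, zero_dotProduct, if_pos (Or.inl hk)]
  · by_cases hl : sv M l = 0
    · rw [lvec, lvec, if_neg hk, if_pos hl, dotProduct_zero, if_pos (Or.inr hl)]
    · rw [lvec, lvec, if_neg hk, if_neg hl, if_neg (not_or.2 ⟨hk, hl⟩)]
      rw [smul_dotProduct, dotProduct_smul, dot_image_eq, rvec_dot, smul_eq_mul, smul_eq_mul]
      by_cases hkl : k = l
      · subst hkl
        rw [if_pos rfl, mul_one, ← sq_sv, sq]
        field_simp
      · rw [if_neg hkl]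
        ring

lemma lvec_dot_ne (M : Matrix m n ℝ) (k l : n) (h : k ≠ l) :
    lvec M k ⬝ᵥ lvec M l = 0 := by
  rw [lvec_dot]
  by_cases h' : sv M k = 0 ∨ sv M l = 0
  · rw [if_pos h']
  · rw [if_neg h', if_neg h]

lemma lvec_dot_self_le (M : Matrix m n ℝ) (k : n) :
    lvec M k ⬝ᵥ lvec M k ≤ 1 := by
  rw [lvec_dot]
  by_cases h' : sv M k = 0 ∨ sv M k = 0
  · rw [if_pos h']; norm_num
  · rw [if_neg h', if_pos rfl]

lemma lvec_dot_mulVec (M : Matrix m n ℝ) (k : n) :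
    lvec M k ⬝ᵥ (M *ᵥ rvec M k) = sv M k := by
  rw [mulVec_rvec, dotProduct_smul, smul_eq_mul, lvec_dot]
  by_cases h : sv M k = 0
  · rw [if_pos (Or.inl h), mul_zero, h]
  · rw [if_neg (by tauto), if_pos rfl, mul_one]

/-- Cauchy–Schwarz consequence. -/
lemma cs_aux {κ : Type*} [Fintype κ] (x y : κ → ℝ)
    (hx : ∑ k, x k ^ 2 ≤ 1) (hy : ∑ k, y k ^ 2 ≤ 1) :
    ∑ k, |x k| * |y k| ≤ 1 := by
  have h := Finset.sum_mul_sq_le_sq_mul_sq Finset.univ (fun k => |x k|) (fun k => |y k|)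
  simp only [sq_abs] at h
  have hnn : (0:ℝ) ≤ ∑ k, |x k| * |y k| :=
    Finset.sum_nonneg fun k _ => mul_nonneg (abs_nonneg _) (abs_nonneg _)
  have hx0 : (0:ℝ) ≤ ∑ k, x k ^ 2 := Finset.sum_nonneg fun k _ => sq_nonneg _
  have hy0 : (0:ℝ) ≤ ∑ k, y k ^ 2 := Finset.sum_nonneg fun k _ => sq_nonneg _
  nlinarith

/-- Key upper bound: generalized Peierls inequality for singular values. -/
lemma key_upper {p : ℝ} (hp : 1 ≤ p) (M : Matrix m n ℝ) (v : n → n → ℝ) (w : n → m → ℝ)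
    (hv0 : ∀ k l, k ≠ l → v k ⬝ᵥ v l = 0) (hv1 : ∀ k, v k ⬝ᵥ v k ≤ 1)
    (hw0 : ∀ k l, k ≠ l → w k ⬝ᵥ w l = 0) (hw1 : ∀ k, w k ⬝ᵥ w k ≤ 1) :
    ∑ j, |w j ⬝ᵥ (M *ᵥ v j)| ^ p ≤ ∑ k, sv M k ^ p := by
  have hrv0 : ∀ k l : n, k ≠ l → rvec M k ⬝ᵥ rvec M l = 0 := by
    intro k l h; rw [rvec_dot, if_neg h]
  have hrv1 : ∀ k : n, rvec M k ⬝ᵥ rvec M k ≤ 1 := by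
    intro k; rw [rvec_dot, if_pos rfl]
  set a : n → n → ℝ := fun j k => |rvec M k ⬝ᵥ v j| * |w j ⬝ᵥ lvec M k| with ha
  have hanonneg : ∀ j k, 0 ≤ a j k := fun j k => mul_nonneg (abs_nonneg _) (abs_nonneg _)
  have hdecomp : ∀ j, w j ⬝ᵥ (M *ᵥ v j)
      = ∑ k, (rvec M k ⬝ᵥ v j) * (w j ⬝ᵥ lvec M k) * sv M k := by
    intro j
    have h1 : M *ᵥ v j = ∑ k, (rvec M k ⬝ᵥ v j) • (sv M k • lvec M k) := by
      conv_lhs => rw [← rvec_expand M (v j)]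
      rw [← Matrix.mulVecLin_apply, map_sum]
      refine Finset.sum_congr rfl fun k _ => ?_
      rw [_root_.map_smul, Matrix.mulVecLin_apply, mulVec_rvec]
    rw [h1, dotProduct_comm, SmoothJAux.sum_dotProduct]
    refine Finset.sum_congr rfl fun k _ => ?_
    rw [smul_dotProduct, smul_dotProduct, smul_eq_mul, smul_eq_mul,
      dotProduct_comm (lvec M k) (w j)]
    ring
  have habs : ∀ j, |w j ⬝ᵥ (M *ᵥ v j)| ≤ ∑ k, a j k * sv M k := by
    intro j
    rw [hdecomp j]
    refine (Finset.abs_sum_le_sum_abs _ _).trans ?_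
    refine Finset.sum_le_sum fun k _ => le_of_eq ?_
    rw [abs_mul, abs_mul, abs_of_nonneg (sv_nonneg M k), ha]
  have hrow : ∀ j, ∑ k, a j k ≤ 1 := by
    intro j
    have h1 : ∑ k, (rvec M k ⬝ᵥ v j) ^ 2 ≤ 1 :=
      le_trans (subBessel (rvec M) (v j) hrv0 hrv1) (hv1 j)
    have h2 : ∑ k, (w j ⬝ᵥ lvec M k) ^ 2 ≤ 1 := by
      refine le_trans (le_of_eq (Finset.sum_congr rfl fun k _ => dot_sq_comm _ _)) ?_
      exact le_trans (subBessel (lvec M) (w j) (lvec_dot_ne M) (lvec_dot_self_le M)) (hw1 j)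
    exact cs_aux (fun k => rvec M k ⬝ᵥ v j) (fun k => w j ⬝ᵥ lvec M k) h1 h2
  have hcol : ∀ k, ∑ j, a j k ≤ 1 := by
    intro k
    have h1 : ∑ j, (rvec M k ⬝ᵥ v j) ^ 2 ≤ 1 := by
      refine le_trans (le_of_eq (Finset.sum_congr rfl fun j _ => dot_sq_comm _ _)) ?_
      exact le_trans (subBessel v (rvec M k) hv0 hv1) (hrv1 k)
    have h2 : ∑ j, (w j ⬝ᵥ lvec M k) ^ 2 ≤ 1 :=
      le_trans (subBessel w (lvec M k) hw0 hw1) (lvec_dot_self_le M k)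
    exact cs_aux (fun j => rvec M k ⬝ᵥ v j) (fun j => w j ⬝ᵥ lvec M k) h1 h2
  calc ∑ j, |w j ⬝ᵥ (M *ᵥ v j)| ^ p
      ≤ ∑ j, ∑ k, a j k * sv M k ^ p := by
        refine Finset.sum_le_sum fun j _ => ?_
        refine le_trans (Real.rpow_le_rpow (abs_nonneg _) (habs j) (by linarith)) ?_
        exact jensen_subunit hp Finset.univ (a j) (sv M)
          (fun k _ => hanonneg j k) (hrow j) (fun k _ => sv_nonneg M k)
    _ = ∑ k, (∑ j, a j k) * sv M k ^ p := by
        rw [Finset.sum_comm]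
        refine Finset.sum_congr rfl fun k _ => ?_
        rw [Finset.sum_mul]
    _ ≤ ∑ k, sv M k ^ p := by
        refine Finset.sum_le_sum fun k _ => ?_
        calc (∑ j, a j k) * sv M k ^ p ≤ 1 * sv M k ^ p :=
              mul_le_mul_of_nonneg_right (hcol k) (Real.rpow_nonneg (sv_nonneg M k) p)
          _ = sv M k ^ p := one_mul _

lemma abs_rpow_combo {p : ℝ} (hp : 1 ≤ p) {a b : ℝ} (x y : ℝ)
    (ha : 0 ≤ a) (hb : 0 ≤ b) (hab : a + b = 1) :
    |a * x + b * y| ^ p ≤ a * |x| ^ p + b * |y| ^ p := by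
  have h1 : |a * x + b * y| ≤ a * |x| + b * |y| := by
    refine (abs_add_le _ _).trans ?_
    rw [abs_mul, abs_mul, abs_of_nonneg ha, abs_of_nonneg hb]
  have h2 : |a * x + b * y| ^ p ≤ (a * |x| + b * |y|) ^ p :=
    Real.rpow_le_rpow (abs_nonneg _) h1 (by linarith)
  refine h2.trans ?_
  have := (convexOn_rpow hp).2 (Set.mem_Ici.2 (abs_nonneg x)) (Set.mem_Ici.2 (abs_nonneg y))
    ha hb hab
  simpa [smul_eq_mul] using this

/-- Joint convexity of the Schatten-type functional `M ↦ ∑ k, (σ_k M) ^ p`. -/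
lemma spow_convexOn {p : ℝ} (hp : 1 ≤ p) :
    ConvexOn ℝ Set.univ (fun M : Matrix m n ℝ => ∑ k, sv M k ^ p) := by
  refine ⟨convex_univ, ?_⟩
  intro A _ B _ a b ha hb hab
  simp only [smul_eq_mul]
  set C : Matrix m n ℝ := a • A + b • B with hC
  have hsplit : ∀ x : n → ℝ, C *ᵥ x = a • (A *ᵥ x) + b • (B *ᵥ x) := by
    intro x
    rw [hC, Matrix.add_mulVec, Matrix.smul_mulVec, Matrix.smul_mulVec]
  have hrv0 : ∀ k l : n, k ≠ l → rvec C k ⬝ᵥ rvec C l = 0 := by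
    intro k l h; rw [rvec_dot, if_neg h]
  have hrv1 : ∀ k : n, rvec C k ⬝ᵥ rvec C k ≤ 1 := by
    intro k; rw [rvec_dot, if_pos rfl]
  calc ∑ k, sv C k ^ p
      = ∑ k, |lvec C k ⬝ᵥ (C *ᵥ rvec C k)| ^ p := by
        refine Finset.sum_congr rfl fun k _ => ?_
        rw [lvec_dot_mulVec, abs_of_nonneg (sv_nonneg C k)]
    _ ≤ ∑ k, (a * |lvec C k ⬝ᵥ (A *ᵥ rvec C k)| ^ p
            + b * |lvec C k ⬝ᵥ (B *ᵥ rvec C k)| ^ p) := by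
        refine Finset.sum_le_sum fun k _ => ?_
        have hd : lvec C k ⬝ᵥ (C *ᵥ rvec C k)
            = a * (lvec C k ⬝ᵥ (A *ᵥ rvec C k)) + b * (lvec C k ⬝ᵥ (B *ᵥ rvec C k)) := by
          rw [hsplit, dotProduct_add, dotProduct_smul, dotProduct_smul, smul_eq_mul, smul_eq_mul]
        rw [hd]
        exact abs_rpow_combo hp _ _ ha hb hab
    _ = a * ∑ k, |lvec C k ⬝ᵥ (A *ᵥ rvec C k)| ^ p
        + b * ∑ k, |lvec C k ⬝ᵥ (B *ᵥ rvec C k)| ^ p := by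
        rw [Finset.sum_add_distrib, Finset.mul_sum, Finset.mul_sum]
    _ ≤ a * ∑ k, sv A k ^ p + b * ∑ k, sv B k ^ p := by
        refine add_le_add ?_ ?_
        · exact mul_le_mul_of_nonneg_left
            (key_upper hp A (rvec C) (lvec C) hrv0 hrv1 (lvec_dot_ne C) (lvec_dot_self_le C)) ha
        · exact mul_le_mul_of_nonneg_left
            (key_upper hp B (rvec C) (lvec C) hrv0 hrv1 (lvec_dot_ne C) (lvec_dot_self_le C)) hb

end SmoothJAux2

namespace SmoothJBridge

lemma trace_eq_sum_eigen {κ : Type*} [Fintype κ] [DecidableEq κ]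
    (A : Matrix κ κ ℝ) (hA : A.IsHermitian) : A.trace = ∑ i, hA.eigenvalues i := by
  conv_lhs => rw [hA.spectral_theorem]
  rw [Unitary.conjStarAlgAut_apply, Matrix.trace_mul_cycle, Unitary.star_mul_self_of_mem hA.eigenvectorUnitary.prop,
    Matrix.one_mul, Matrix.trace_diagonal]
  refine Finset.sum_congr rfl fun i _ => ?_
  simp [RCLike.ofReal_real_eq_id]

lemma trace_mpow {N : ℕ} (A : Matrix (Fin N) (Fin N) ℝ) (hA : A.IsHermitian) (r : ℝ) :
    (mpow A r).trace = ∑ i, hA.eigenvalues i ^ r := by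
  simp only [mpow]
  rw [dif_pos hA]
  have hcfc : hA.cfc (fun x : ℝ => x ^ r)
      = (hA.eigenvectorUnitary : Matrix (Fin N) (Fin N) ℝ)
        * Matrix.diagonal (RCLike.ofReal ∘ (fun x : ℝ => x ^ r) ∘ hA.eigenvalues)
        * star (hA.eigenvectorUnitary : Matrix (Fin N) (Fin N) ℝ) := rfl
  rw [hcfc, Matrix.trace_mul_cycle, Unitary.star_mul_self_of_mem hA.eigenvectorUnitary.prop,
    Matrix.one_mul, Matrix.trace_diagonal]
  refine Finset.sum_congr rfl fun i _ => ?_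
  simp [RCLike.ofReal_real_eq_id]

end SmoothJBridge

namespace SmoothJBridge2

open SmoothJAux SmoothJAux2 SmoothJBridge

variable {N : ℕ} {m' : Type*} [Fintype m']

lemma term1_eq (M : Matrix m' (Fin N) ℝ) (p : ℝ) :
    (mpow (Mᴴ * M) (p / 2)).trace = ∑ k, sv M k ^ p := by
  rw [trace_mpow _ (Matrix.isHermitian_conjTranspose_mul_self M)]
  refine Finset.sum_congr rfl fun k _ => ?_
  have h0 := ev_nonneg M k
  show ev M k ^ (p / 2) = Real.sqrt (ev M k) ^ p
  rw [Real.sqrt_eq_rpow, ← Real.rpow_mul h0]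
  congr 1
  ring

lemma smul_one_mul_smul_one (μ : ℝ) {κ : Type*} [Fintype κ] [DecidableEq κ] :
    (μ • (1 : Matrix κ κ ℝ)) * (μ • 1) = (μ ^ 2) • 1 := by
  rw [Matrix.smul_mul, Matrix.mul_smul, Matrix.one_mul, smul_smul, sq]

lemma stack_eq {n : ℕ} (Z : Matrix (Fin n) (Fin n) ℝ) (μ : ℝ) :
    Zᵀ * Z + μ ^ 2 • (1 : Matrix (Fin n) (Fin n) ℝ)
      = (fromRows Z (μ • (1 : Matrix (Fin n) (Fin n) ℝ)))ᴴ
        * fromRows Z (μ • (1 : Matrix (Fin n) (Fin n) ℝ)) := by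
  rw [Matrix.conjTranspose_fromRows_eq_fromCols_conjTranspose,
    Matrix.fromCols_mul_fromRows,
    Matrix.conjTranspose_eq_transpose_of_trivial,
    Matrix.conjTranspose_eq_transpose_of_trivial,
    Matrix.transpose_smul, Matrix.transpose_one, smul_one_mul_smul_one]

lemma fromRows_linear {n : ℕ} (Z₁ Z₂ : Matrix (Fin n) (Fin n) ℝ) (μ₁ μ₂ a b : ℝ) :
    fromRows (a • Z₁ + b • Z₂) ((a * μ₁ + b * μ₂) • (1 : Matrix (Fin n) (Fin n) ℝ))
      = a • fromRows Z₁ (μ₁ • 1) + b • fromRows Z₂ (μ₂ • 1) := by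
  ext i j
  cases i with
  | inl i =>
      simp [Matrix.fromRows_apply_inl, Matrix.add_apply, Matrix.smul_apply, smul_eq_mul]
  | inr i =>
      simp only [Matrix.fromRows_apply_inr, Matrix.add_apply, Matrix.smul_apply,
        smul_eq_mul, Matrix.one_apply]
      by_cases h : i = j <;> simp [h] <;> ring

/-- single-column matrix built from a vector -/
def colm (u : m' → ℝ) : Matrix m' Unit ℝ := Matrix.of fun i _ => u i

lemma colm_smul_add (u v : m' → ℝ) (a b : ℝ) :
    colm (fun i => a * u i + b * v i) = a • colm u + b • colm v := by
  ext i j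
  simp [colm, Matrix.add_apply, Matrix.smul_apply, smul_eq_mul]

lemma ev_colm (u : m' → ℝ) : ev (colm u) () = u ⬝ᵥ u := by
  have h := trace_eq_sum_eigen ((colm u)ᴴ * colm u) (Matrix.isHermitian_conjTranspose_mul_self _)
  have h1 : ((colm u)ᴴ * colm u).trace = u ⬝ᵥ u := by
    rw [Matrix.trace]
    rw [Fintype.sum_unique]
    rw [Matrix.diag_apply, Matrix.mul_apply]
    refine Finset.sum_congr rfl fun i _ => ?_
    simp [colm, Matrix.conjTranspose_apply, dotProduct]
  have h2 : ∑ k : Unit, (Matrix.isHermitian_conjTranspose_mul_self (colm u)).eigenvalues k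
      = ev (colm u) () := by
    rw [Fintype.sum_unique]
    rfl
  rw [← h2, ← h, h1]

lemma colm_sv_sum (u : m' → ℝ) (q : ℝ) :
    ∑ k : Unit, sv (colm u) k ^ q = (u ⬝ᵥ u) ^ (q / 2) := by
  rw [Fintype.sum_unique]
  have h0 : 0 ≤ u ⬝ᵥ u := Finset.sum_nonneg fun i _ => mul_self_nonneg _
  show Real.sqrt (ev (colm u) ()) ^ q = _
  rw [ev_colm, Real.sqrt_eq_rpow, ← Real.rpow_mul h0]
  congr 1
  ring

end SmoothJBridge2

open SmoothJAux SmoothJAux2 SmoothJBridge SmoothJBridge2 in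
/-- **Theorem 1 (joint convexity).** For `1 ≤ p, q ≤ 2` and `λ > 0`, the smoothed LRR objective
`(Z, μ) ↦ Tr((ZᵀZ + μ²I)^{p/2}) + λ·∑ᵢ (‖(XZ − X)ᵢ‖₂² + μ²)^{q/2}` is jointly convex in
`(Z, μ)` on `ℝ^{n×n} × ℝ`. -/
theorem stmt_9 {d n : ℕ} (X : Matrix (Fin d) (Fin n) ℝ) (lam p q : ℝ)
    (hlam : 0 < lam) (hp1 : 1 ≤ p) (hp2 : p ≤ 2) (hq1 : 1 ≤ q) (hq2 : q ≤ 2) :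
    ConvexOn ℝ Set.univ
      (fun Zμ : Matrix (Fin n) (Fin n) ℝ × ℝ => smoothJ X lam p q Zμ.1 Zμ.2) := by
  refine ⟨convex_univ, ?_⟩
  rintro ⟨Z₁, μ₁⟩ - ⟨Z₂, μ₂⟩ - a b ha hb hab
  simp only [smul_eq_mul]
  show smoothJ X lam p q (a • Z₁ + b • Z₂) (a * μ₁ + b * μ₂)
      ≤ a * smoothJ X lam p q Z₁ μ₁ + b * smoothJ X lam p q Z₂ μ₂
  simp only [smoothJ]
  -- Term 1
  have hT1 : (mpow ((a • Z₁ + b • Z₂)ᵀ * (a • Z₁ + b • Z₂)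
        + (a * μ₁ + b * μ₂) ^ 2 • (1 : Matrix (Fin n) (Fin n) ℝ)) (p / 2)).trace
      ≤ a * (mpow (Z₁ᵀ * Z₁ + μ₁ ^ 2 • 1) (p / 2)).trace
        + b * (mpow (Z₂ᵀ * Z₂ + μ₂ ^ 2 • 1) (p / 2)).trace := by
    rw [stack_eq, stack_eq, stack_eq, term1_eq, term1_eq, term1_eq, fromRows_linear]
    have h := (spow_convexOn (m := Fin n ⊕ Fin n) (n := Fin n) hp1).2
      (Set.mem_univ (fromRows Z₁ (μ₁ • 1))) (Set.mem_univ (fromRows Z₂ (μ₂ • 1))) ha hb hab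
    simpa using h
  -- Term 2
  have haff : X * (a • Z₁ + b • Z₂) - X = a • (X * Z₁ - X) + b • (X * Z₂ - X) := by
    rw [Matrix.mul_add, Matrix.mul_smul, Matrix.mul_smul, smul_sub, smul_sub]
    have hX : a • X + b • X = X := by rw [← add_smul, hab, one_smul]
    calc a • (X * Z₁) + b • (X * Z₂) - X
        = a • (X * Z₁) + b • (X * Z₂) - (a • X + b • X) := by rw [hX]
      _ = a • (X * Z₁) - a • X + (b • (X * Z₂) - b • X) := by abel
  have hT2 : ∀ i, (∑ j, ((X * (a • Z₁ + b • Z₂) - X) j i) ^ 2 + (a * μ₁ + b * μ₂) ^ 2) ^ (q / 2)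
      ≤ a * (∑ j, ((X * Z₁ - X) j i) ^ 2 + μ₁ ^ 2) ^ (q / 2)
        + b * (∑ j, ((X * Z₂ - X) j i) ^ 2 + μ₂ ^ 2) ^ (q / 2) := by
    intro i
    set u₁ : (Fin d ⊕ Unit) → ℝ := Sum.elim (fun j => (X * Z₁ - X) j i) (fun _ => μ₁) with hu₁
    set u₂ : (Fin d ⊕ Unit) → ℝ := Sum.elim (fun j => (X * Z₂ - X) j i) (fun _ => μ₂) with hu₂
    set um : (Fin d ⊕ Unit) → ℝ :=
      Sum.elim (fun j => (X * (a • Z₁ + b • Z₂) - X) j i) (fun _ => a * μ₁ + b * μ₂) with hum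
    have hdot : ∀ (W : Matrix (Fin d) (Fin n) ℝ) (μ : ℝ),
        (Sum.elim (fun j => W j i) (fun _ => μ) : (Fin d ⊕ Unit) → ℝ) ⬝ᵥ
          Sum.elim (fun j => W j i) (fun _ => μ)
        = ∑ j, (W j i) ^ 2 + μ ^ 2 := by
      intro W μ
      simp [dotProduct, Fintype.sum_sum_type, sq]
    have humab : um = fun k => a * u₁ k + b * u₂ k := by
      funext k
      cases k with
      | inl j =>
          have := congrFun (congrFun haff j) i
          simpa [hum, hu₁, hu₂, Matrix.add_apply, Matrix.smul_apply, smul_eq_mul] using this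
      | inr _ => rfl
    rw [← hdot (X * (a • Z₁ + b • Z₂) - X) (a * μ₁ + b * μ₂),
      ← hdot (X * Z₁ - X) μ₁, ← hdot (X * Z₂ - X) μ₂]
    rw [← colm_sv_sum um q, ← colm_sv_sum u₁ q, ← colm_sv_sum u₂ q]
    have hcm : colm um = a • colm u₁ + b • colm u₂ := by
      rw [humab]; exact colm_smul_add u₁ u₂ a b
    rw [hcm]
    have h := (spow_convexOn (m := Fin d ⊕ Unit) (n := Unit) hq1).2
      (Set.mem_univ (colm u₁)) (Set.mem_univ (colm u₂)) ha hb hab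
    simpa using h
  have hsum : ∑ i, (∑ j, ((X * (a • Z₁ + b • Z₂) - X) j i) ^ 2
        + (a * μ₁ + b * μ₂) ^ 2) ^ (q / 2)
      ≤ a * ∑ i, (∑ j, ((X * Z₁ - X) j i) ^ 2 + μ₁ ^ 2) ^ (q / 2)
        + b * ∑ i, (∑ j, ((X * Z₂ - X) j i) ^ 2 + μ₂ ^ 2) ^ (q / 2) := by
    rw [Finset.mul_sum, Finset.mul_sum, ← Finset.sum_add_distrib]
    exact Finset.sum_le_sum fun i _ => hT2 i
  have hlam' : lam * (∑ i, (∑ j, ((X * (a • Z₁ + b • Z₂) - X) j i) ^ 2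
        + (a * μ₁ + b * μ₂) ^ 2) ^ (q / 2))
      ≤ lam * (a * ∑ i, (∑ j, ((X * Z₁ - X) j i) ^ 2 + μ₁ ^ 2) ^ (q / 2)
        + b * ∑ i, (∑ j, ((X * Z₂ - X) j i) ^ 2 + μ₂ ^ 2) ^ (q / 2)) :=
    mul_le_mul_of_nonneg_left hsum hlam.le
  calc _ ≤ (a * (mpow (Z₁ᵀ * Z₁ + μ₁ ^ 2 • 1) (p / 2)).trace
        + b * (mpow (Z₂ᵀ * Z₂ + μ₂ ^ 2 • 1) (p / 2)).trace)
      + lam * (a * ∑ i, (∑ j, ((X * Z₁ - X) j i) ^ 2 + μ₁ ^ 2) ^ (q / 2)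
        + b * ∑ i, (∑ j, ((X * Z₂ - X) j i) ^ 2 + μ₂ ^ 2) ^ (q / 2)) :=
      add_le_add hT1 hlam'
    _ = _ := by ring
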